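/- Let b and c be integers with b ≥ 1 and c ≥ 1. Then the absolute value of the determinant of the 7×7 matrix obtained from G₁(b,c) by deleting the first and second rows and the first and second columns equals (3bc+3b+3c+2)(3bc+5b+5c+4). -/

import Mathlib

open Matrix

/-- The 9×9 Goeritz matrix `G₁(b,c)` of the checkerboard-colored diagram of the
link `𝓛` arising from the pretzel knot `P(3, 2b+1, 2c+1)`. -/
def G1 (b c : ℤ) : Matrix (Fin 9) (Fin 9) ℤ :=
  !![-1,  0,  0,  -1,   0,   0,    1,      0,      0;
      0, -1,  0,   0,  -1,   0,    0,      1,      0;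
      0,  0, -1,   0,   0,  -1,    0,      0,      1;
     -1,  0,  0, b+1,   0,   0,    0,     -b,      0;
      0, -1,  0,   0, b+1,   0,    0,      0,     -b;
      0,  0, -1,   0,   0, b+1,   -b,      0,      0;
      1,  0,  0,   0,   0,  -b, b+2*c+1, -(c+1), -(c+1);
      0,  1,  0,  -b,   0,   0, -(c+1), b+2*c+1, -(c+1);
      0,  0,  1,   0,  -b,   0, -(c+1), -(c+1), b+2*c+1]

set_option maxRecDepth 4000 in
private lemma det7_expand (a d g h m p t u x y A B C D E F G H I J K L M : ℤ) :
    (!![a, 0, 0, d, 0, 0, g;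
        0, h, 0, 0, 0, m, 0;
        0, 0, p, 0, 0, 0, t;
        u, 0, 0, x, y, 0, 0;
        0, 0, 0, A, B, C, D;
        0, E, 0, 0, F, G, H;
        I, 0, J, 0, K, L, M] : Matrix (Fin 7) (Fin 7) ℤ).det =
      a * (!![h, 0, 0, 0, m, 0;
              0, p, 0, 0, 0, t;
              0, 0, x, y, 0, 0;
              0, 0, A, B, C, D;
              E, 0, 0, F, G, H;
              0, J, 0, K, L, M] : Matrix (Fin 6) (Fin 6) ℤ).det
      - u * (!![0, 0, d, 0, 0, g;
                h, 0, 0, 0, m, 0;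
                0, p, 0, 0, 0, t;
                0, 0, A, B, C, D;
                E, 0, 0, F, G, H;
                0, J, 0, K, L, M] : Matrix (Fin 6) (Fin 6) ℤ).det
      + I * (!![0, 0, d, 0, 0, g;
                h, 0, 0, 0, m, 0;
                0, p, 0, 0, 0, t;
                0, 0, x, y, 0, 0;
                0, 0, A, B, C, D;
                E, 0, 0, F, G, H] : Matrix (Fin 6) (Fin 6) ℤ).det := by
  rw [Matrix.det_succ_column_zero]
  simp only [Fin.sum_univ_succ, Fin.sum_univ_zero]
  have e0 : ((!![a, 0, 0, d, 0, 0, g;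
        0, h, 0, 0, 0, m, 0;
        0, 0, p, 0, 0, 0, t;
        u, 0, 0, x, y, 0, 0;
        0, 0, 0, A, B, C, D;
        0, E, 0, 0, F, G, H;
        I, 0, J, 0, K, L, M] : Matrix (Fin 7) (Fin 7) ℤ).submatrix
          (Fin.succAbove 0) Fin.succ) =
      !![h, 0, 0, 0, m, 0;
         0, p, 0, 0, 0, t;
         0, 0, x, y, 0, 0;
         0, 0, A, B, C, D;
         E, 0, 0, F, G, H;
         0, J, 0, K, L, M] := by
    ext i j; fin_cases i <;> fin_cases j <;> rfl
  have e3 : ((!![a, 0, 0, d, 0, 0, g;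
        0, h, 0, 0, 0, m, 0;
        0, 0, p, 0, 0, 0, t;
        u, 0, 0, x, y, 0, 0;
        0, 0, 0, A, B, C, D;
        0, E, 0, 0, F, G, H;
        I, 0, J, 0, K, L, M] : Matrix (Fin 7) (Fin 7) ℤ).submatrix
          ((Fin.succ (0 : Fin 4)).succ.succ.succAbove) Fin.succ) =
      !![0, 0, d, 0, 0, g;
         h, 0, 0, 0, m, 0;
         0, p, 0, 0, 0, t;
         0, 0, A, B, C, D;
         E, 0, 0, F, G, H;
         0, J, 0, K, L, M] := by
    ext i j; fin_cases i <;> fin_cases j <;> rfl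
  have e6 : ((!![a, 0, 0, d, 0, 0, g;
        0, h, 0, 0, 0, m, 0;
        0, 0, p, 0, 0, 0, t;
        u, 0, 0, x, y, 0, 0;
        0, 0, 0, A, B, C, D;
        0, E, 0, 0, F, G, H;
        I, 0, J, 0, K, L, M] : Matrix (Fin 7) (Fin 7) ℤ).submatrix
          ((Fin.succ (0 : Fin 1)).succ.succ.succ.succ.succ.succAbove) Fin.succ) =
      !![0, 0, d, 0, 0, g;
         h, 0, 0, 0, m, 0;
         0, p, 0, 0, 0, t;
         0, 0, x, y, 0, 0;
         0, 0, A, B, C, D;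
         E, 0, 0, F, G, H] := by
    ext i j; fin_cases i <;> fin_cases j <;> rfl
  rw [e0, e3, e6]
  simp
  ring

set_option maxRecDepth 8000 in
set_option maxHeartbeats 2000000 in
private lemma detA (b c : ℤ) :
    (!![b+1, 0, 0, 0, -b, 0;
        0, b+1, 0, 0, 0, -b;
        0, 0, b+1, -b, 0, 0;
        0, 0, -b, b+2*c+1, -(c+1), -(c+1);
        -b, 0, 0, -(c+1), b+2*c+1, -(c+1);
        0, -b, 0, -(c+1), -(c+1), b+2*c+1] : Matrix (Fin 6) (Fin 6) ℤ).det =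
      -(9*b^2*c^2 + 18*b^2*c + 9*b^2 + 18*b*c^2 + 30*b*c + 12*b + 9*c^2 + 12*c + 4) := by
  simp [Matrix.det_succ_row_zero, Fin.sum_univ_succ, Fin.succAbove]
  ring

set_option maxRecDepth 8000 in
set_option maxHeartbeats 2000000 in
private lemma detB (b c : ℤ) :
    (!![0, 0, -1, 0, 0, 1;
        b+1, 0, 0, 0, -b, 0;
        0, b+1, 0, 0, 0, -b;
        0, 0, -b, b+2*c+1, -(c+1), -(c+1);
        -b, 0, 0, -(c+1), b+2*c+1, -(c+1);
        0, -b, 0, -(c+1), -(c+1), b+2*c+1] : Matrix (Fin 6) (Fin 6) ℤ).det =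
      3*b^2*c^2 + 9*b^2*c + 6*b^2 + 12*b*c^2 + 23*b*c + 10*b + 9*c^2 + 12*c + 4 := by
  simp [Matrix.det_succ_row_zero, Fin.sum_univ_succ, Fin.succAbove]
  ring

set_option maxRecDepth 8000 in
set_option maxHeartbeats 2000000 in
private lemma detC (b c : ℤ) :
    (!![0, 0, -1, 0, 0, 1;
        b+1, 0, 0, 0, -b, 0;
        0, b+1, 0, 0, 0, -b;
        0, 0, b+1, -b, 0, 0;
        0, 0, -b, b+2*c+1, -(c+1), -(c+1);
        -b, 0, 0, -(c+1), b+2*c+1, -(c+1)] : Matrix (Fin 6) (Fin 6) ℤ).det =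
      -(3*b^2*c^2 + 3*b^2*c + 6*b*c^2 + 5*b*c + 3*c^2 + 2*c) := by
  simp [Matrix.det_succ_row_zero, Fin.sum_univ_succ, Fin.succAbove]
  ring

theorem stmt6 (b c : ℤ) (hb : 1 ≤ b) (hc : 1 ≤ c) :
    |((G1 b c).submatrix (fun i : Fin (7) => (⟨i.1 + 2, by have := i.2; omega⟩ : Fin (9)))
        (fun i : Fin (7) => (⟨i.1 + 2, by have := i.2; omega⟩ : Fin (9)))).det| =
      (3*b*c + 3*b + 3*c + 2) * (3*b*c + 5*b + 5*c + 4) := by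
  have hM : ((G1 b c).submatrix (fun i : Fin (7) => (⟨i.1 + 2, by have := i.2; omega⟩ : Fin (9)))
        (fun i : Fin (7) => (⟨i.1 + 2, by have := i.2; omega⟩ : Fin (9)))) =
      !![-1,   0,   0,  -1,    0,      0,      1;
          0, b+1,   0,   0,    0,     -b,      0;
          0,   0, b+1,   0,    0,      0,     -b;
         -1,   0,   0, b+1,   -b,      0,      0;
          0,   0,   0,  -b, b+2*c+1, -(c+1), -(c+1);
          0,  -b,   0,   0, -(c+1), b+2*c+1, -(c+1);
          1,   0,  -b,   0, -(c+1), -(c+1), b+2*c+1] := by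
    ext i j
    fin_cases i <;> fin_cases j <;> rfl
  rw [hM, det7_expand, detA, detB, detC]
  have h1 : 0 < 3*b*c + 3*b + 3*c + 2 := by nlinarith
  have h2 : 0 < 3*b*c + 5*b + 5*c + 4 := by nlinarith
  rw [abs_of_nonneg (by nlinarith [mul_pos h1 h2])]
  ring
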